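/- The map P is an almost faithful conditional expectation from A onto C: its range is contained in C, P(c) = c for all c ∈ C, and whenever a ∈ A satisfies P(b* a* a b) = 0 for all b ∈ A, then a = 0. -/

import Mathlib

set_option maxHeartbeats 1000000


variable {A : Type*} [NonUnitalCStarAlgebra A]

/-- The set of normalisers of `D` inside the subset `B` of `A`:
`N_B(D) = {m ∈ B : m* D m ⊆ D and m D m* ⊆ D}`. -/
def relNormalizers (B D : Set A) : Set A :=
  {m | m ∈ B ∧ (∀ c ∈ D, star m * c * m ∈ D) ∧ (∀ c ∈ D, m * c * star m ∈ D)}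

variable [PartialOrder A] [StarOrderedRing A]

/-- `Q` is a conditional expectation from `B` onto `D`: a contractive linear map on `B`
with range in `D`, restricting to the identity on `D`, positive, and `D`-bimodular. -/
def IsCondExpOn (B D : Set A) (Q : A → A) : Prop :=
  (∀ a ∈ B, ‖Q a‖ ≤ ‖a‖) ∧ (∀ a ∈ B, ∀ b ∈ B, Q (a + b) = Q a + Q b) ∧
    (∀ (z : ℂ), ∀ a ∈ B, Q (z • a) = z • Q a) ∧ (∀ a ∈ B, Q a ∈ D) ∧
    (∀ d ∈ D, Q d = d) ∧ (∀ a ∈ B, 0 ≤ a → 0 ≤ Q a) ∧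
    (∀ d₁ ∈ D, ∀ d₂ ∈ D, ∀ a ∈ B, Q (d₁ * a * d₂) = d₁ * Q a * d₂)

/-- membership of nonunital cfc in a closed star subalgebra -/
lemma cfcn_mem_of_closed (S : NonUnitalStarSubalgebra ℂ A) (hS : IsClosed (S : Set A))
    (k : A) (hk : k ∈ S) (hksa : IsSelfAdjoint k) (φ : ℝ → ℝ) (hφc : Continuous φ)
    (hφ0 : φ 0 = 0) : cfcₙ φ k ∈ S := by
  letI : NonUnitalCStarAlgebra S := @NonUnitalStarSubalgebra.nonUnitalCStarAlgebra _ A _ _ _ _ _ S hS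
  set kk : S := ⟨k, hk⟩ with hkk
  have hkksa : IsSelfAdjoint kk := Subtype.ext hksa.star_eq
  have hmap := NonUnitalStarAlgHomClass.map_cfcₙ (S := ℂ)
    (NonUnitalStarSubalgebraClass.subtype S) φ kk
    (hf := hφc.continuousOn) (hf₀ := hφ0) (hφ := continuous_subtype_val) (ha := hkksa)
    (hφa := hksa)
  have h' : (NonUnitalStarSubalgebraClass.subtype S) kk = k := rfl
  rw [h'] at hmap
  rw [← hmap]
  exact (cfcₙ φ kk).2

theorem stmt2
    (A_ C_ : ℕ → NonUnitalStarSubalgebra ℂ A)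
    (hAclosed : ∀ n, IsClosed (A_ n : Set A))
    (hCclosed : ∀ n, IsClosed (C_ n : Set A))
    (hAmono : ∀ n, (A_ n : Set A) ⊆ (A_ (n + 1) : Set A))
    (hCmono : ∀ n, (C_ n : Set A) ⊆ (C_ (n + 1) : Set A))
    (hCA : ∀ n, (C_ n : Set A) ⊆ (A_ n : Set A))
    (hAdense : Dense (⋃ n, (A_ n : Set A)))
    (Pn : ℕ → A → A)
    (hPn : ∀ n, IsCondExpOn (A_ n : Set A) (C_ n : Set A) (Pn n))
    (hPnFaithful : ∀ n, ∀ a ∈ (A_ n : Set A), Pn n (star a * a) = 0 → a = 0)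
    (hPnCompat : ∀ n, ∀ a ∈ (A_ n : Set A), Pn (n + 1) a = Pn n a)
    (P : A →L[ℂ] A)
    (hP : ∀ n, ∀ a ∈ (A_ n : Set A), P a = Pn n a) :
    (∀ a : A, P a ∈ closure (⋃ k, (C_ k : Set A))) ∧
      (∀ c ∈ closure (⋃ k, (C_ k : Set A)), P c = c) ∧
      (∀ a : A, (∀ b : A, P (star b * star a * a * b) = 0) → a = 0) := by
  set U : Set A := ⋃ n, (A_ n : Set A) with hU
  have hmemU : ∀ x ∈ U, ∃ n, x ∈ (A_ n : Set A) := fun x hx => Set.mem_iUnion.mp hx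
  -- Part 1
  have part1 : ∀ a : A, P a ∈ closure (⋃ k, (C_ k : Set A)) := by
    intro a
    have hmaps : Set.MapsTo P U (closure (⋃ k, (C_ k : Set A))) := by
      intro x hx
      obtain ⟨n, hn⟩ := hmemU x hx
      rw [hP n x hn]
      exact subset_closure (Set.mem_iUnion.mpr ⟨n, (hPn n).2.2.2.1 x hn⟩)
    have h2 := hmaps.closure P.continuous
    rw [hAdense.closure_eq, closure_closure] at h2
    exact h2 (Set.mem_univ a)
  -- Part 2
  have part2 : ∀ c ∈ closure (⋃ k, (C_ k : Set A)), P c = c := by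
    have hcl : IsClosed {x : A | P x = x} := isClosed_eq P.continuous continuous_id
    intro c hc
    refine hcl.closure_subset_iff.mpr ?_ hc
    intro x hx
    obtain ⟨m, hm⟩ := Set.mem_iUnion.mp hx
    have hxA : x ∈ (A_ m : Set A) := hCA m hm
    show P x = x
    rw [hP m x hxA]
    exact (hPn m).2.2.2.2.1 x hm
  -- global positivity of P
  have hPpos : ∀ a : A, 0 ≤ a → 0 ≤ P a := by
    intro a haa
    have hmaps : Set.MapsTo (fun y : A => P (star y * y)) U {x : A | 0 ≤ x} := by
      intro y hy
      obtain ⟨n, hn⟩ := hmemU y hy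
      have h1 : star y * y ∈ (A_ n : Set A) := mul_mem (star_mem hn) hn
      show (0 : A) ≤ P (star y * y)
      rw [hP n _ h1]
      exact (hPn n).2.2.2.2.2.1 _ h1 (star_mul_self_nonneg y)
    have hcont : Continuous (fun y : A => P (star y * y)) :=
      P.continuous.comp (continuous_star.mul continuous_id)
    have h2 := hmaps.closure hcont
    rw [hAdense.closure_eq] at h2
    have h3 := (CStarAlgebra.isClosed_nonneg : IsClosed {x : A | 0 ≤ x}).closure_subset (h2 (Set.mem_univ (CFC.sqrt a)))
    have h5 : IsSelfAdjoint (CFC.sqrt a) := IsSelfAdjoint.of_nonneg (CFC.sqrt_nonneg _)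
    have h4 : star (CFC.sqrt a) * CFC.sqrt a = a := by
      rw [h5.star_eq, CFC.sqrt_mul_sqrt_self a haa]
    simp only [Set.mem_setOf_eq] at h3
    rwa [h4] at h3
  refine ⟨part1, part2, ?_⟩
  -- Part 3: almost faithfulness
  intro a ha
  by_contra haz
  set h := star a * a with hh_def
  have hh : (0 : A) ≤ h := star_mul_self_nonneg a
  have hhsa : IsSelfAdjoint h := IsSelfAdjoint.of_nonneg hh
  have hhne : h ≠ 0 := fun hzz => haz (by
    rw [hh_def] at hzz; exact (CStarRing.star_mul_self_eq_zero_iff a).mp hzz)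
  have hhpos : (0 : ℝ) < ‖h‖ := norm_pos_iff.mpr hhne
  set ε : ℝ := ‖h‖ / 16 with hε
  have hεpos : 0 < ε := by positivity
  -- approximate sqrt h by an element of some A_n
  set s := CFC.sqrt h with hs_def
  have hssa : IsSelfAdjoint s := IsSelfAdjoint.of_nonneg (CFC.sqrt_nonneg _)
  have hss : s * s = h := CFC.sqrt_mul_sqrt_self h hh
  set δ : ℝ := min 1 (ε / (2 * ‖s‖ + 2)) with hδ
  have hδpos : 0 < δ := lt_min one_pos (by positivity)
  have hδ1 : δ ≤ 1 := min_le_left _ _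
  have hδ2 : δ ≤ ε / (2 * ‖s‖ + 2) := min_le_right _ _
  obtain ⟨x, hxU, hxs⟩ : ∃ x ∈ U, dist s x < δ := by
    have hm : s ∈ closure U := by rw [hAdense.closure_eq]; trivial
    exact Metric.mem_closure_iff.mp hm δ hδpos
  obtain ⟨n, hxn⟩ := hmemU x hxU
  have hxs' : ‖x - s‖ < δ := by rwa [dist_comm, dist_eq_norm] at hxs
  set k := star x * x with hk_def
  have hkA : k ∈ (A_ n : Set A) := mul_mem (star_mem hxn) hxn
  have hk0 : (0 : A) ≤ k := star_mul_self_nonneg x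
  have hksa : IsSelfAdjoint k := IsSelfAdjoint.of_nonneg hk0
  have hkh : ‖k - h‖ < ε := by
    have hdecomp : k - h = star x * (x - s) + (star x - star s) * s := by
      rw [hk_def, ← hss, hssa.star_eq]
      noncomm_ring
    have hxnorm : ‖x‖ ≤ ‖s‖ + 1 := by
      calc ‖x‖ = ‖s + (x - s)‖ := by rw [show s + (x - s) = x from by abel]
        _ ≤ ‖s‖ + ‖x - s‖ := norm_add_le _ _
        _ ≤ ‖s‖ + 1 := by linarith
    calc ‖k - h‖ ≤ ‖star x * (x - s)‖ + ‖(star x - star s) * s‖ := by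
          rw [hdecomp]; exact norm_add_le _ _
      _ ≤ ‖star x‖ * ‖x - s‖ + ‖star x - star s‖ * ‖s‖ :=
          add_le_add (norm_mul_le _ _) (norm_mul_le _ _)
      _ = ‖x‖ * ‖x - s‖ + ‖x - s‖ * ‖s‖ := by
          rw [norm_star, ← star_sub, norm_star]
      _ ≤ (‖s‖ + 1) * δ + δ * ‖s‖ := by
          apply add_le_add
          · exact mul_le_mul hxnorm hxs'.le (norm_nonneg _) (by positivity)
          · exact mul_le_mul_of_nonneg_right hxs'.le (norm_nonneg _)
      _ = δ * (2 * ‖s‖ + 1) := by ring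
      _ < δ * (2 * ‖s‖ + 2) := by
          have : (0:ℝ) < 2 * ‖s‖ + 2 := by positivity
          nlinarith
      _ ≤ (ε / (2 * ‖s‖ + 2)) * (2 * ‖s‖ + 2) := by
          have : (0:ℝ) < 2 * ‖s‖ + 2 := by positivity
          exact mul_le_mul_of_nonneg_right hδ2 this.le
      _ = ε := by field_simp
  set c : ℝ := 3 / 4 * ‖h‖ with hc
  have hcpos : 0 < c := by positivity
  have hknorm : c < ‖k‖ := by
    have : ‖h‖ - ‖k‖ ≤ ‖h - k‖ := norm_sub_norm_le _ _
    rw [norm_sub_rev] at this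
    have h16 : ε = ‖h‖ / 16 := rfl
    nlinarith
  -- the quasispectrum of k contains its norm
  have hsp : ‖k‖ ∈ quasispectrum ℝ k := by
    have h1 : (0 : Unitization ℂ A) ≤ (k : Unitization ℂ A) := Unitization.inr_nonneg_iff.mpr hk0
    have h2 := CStarAlgebra.norm_mem_spectrum_of_nonneg h1
    rw [Unitization.norm_inr] at h2
    rw [Unitization.quasispectrum_eq_spectrum_inr' ℝ ℂ k]
    exact h2
  set φ : ℝ → ℝ := fun t => max (t - c) 0 with hφdef
  have hφc : Continuous φ := by rw [hφdef]; fun_prop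
  have hφ0 : φ 0 = 0 := by simp [hφdef, hcpos.le]
  set e := cfcₙ φ k with he_def
  have hesa : IsSelfAdjoint e := cfcₙ_predicate _ k
  -- e is nonzero
  have hen : ‖k‖ - c ≤ ‖e‖ := by
    have h := norm_apply_le_norm_cfcₙ φ k hsp hφc.continuousOn hφ0 hksa
    refine le_trans ?_ h
    exact (le_max_left _ _).trans (le_abs_self _)
  have hene : e ≠ 0 := by
    intro h0
    rw [h0, norm_zero] at hen
    linarith
  -- e belongs to A_n
  have heA : e ∈ (A_ n : Set A) := cfcn_mem_of_closed (A_ n) (hAclosed n) k hkA hksa φ hφc hφ0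
  have hee0 : (0 : A) ≤ e * e := by
    have := star_mul_self_nonneg e
    rwa [hesa.star_eq] at this
  -- key order inequality : (c - ε) • (e * e) ≤ e * h * e
  have hek : c • (e * e) ≤ e * k * e := by
    have h1 : e * k * e = cfcₙ (fun t => φ t * t * φ t) k := by
      rw [he_def,
        cfcₙ_mul _ _ k (by fun_prop) (by simp [hφ0]) (by fun_prop) (by simp [hφ0]),
        cfcₙ_mul _ _ k (by fun_prop) (by simp [hφ0]) (by fun_prop) (by simp [hφ0]),
        cfcₙ_id' ℝ k]
    have h2 : c • (e * e) = cfcₙ (fun t => c • (φ t * φ t)) k := by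
      rw [he_def, cfcₙ_smul c _ k (by fun_prop) (by simp [hφ0]),
        cfcₙ_mul _ _ k (by fun_prop) (by simp [hφ0]) (by fun_prop) (by simp [hφ0])]
    rw [h1, h2]
    refine cfcₙ_mono (fun t ht => ?_) (by fun_prop) (by fun_prop) (by simp [hφ0]) (by simp [hφ0])
    rcases le_or_gt t c with hle | hlt
    · simp [hφdef, max_eq_right (by linarith : t - c ≤ 0)]
    · have h3 : φ t = t - c := by rw [hφdef]; exact max_eq_left (by linarith)
      simp only [smul_eq_mul]
      nlinarith [sq_nonneg (φ t)]
  have hconj : e * (k - h) * e ≤ ε • (e * e) := by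
    have h1 := CStarAlgebra.star_left_conjugate_le_norm_smul (a := e) (b := k - h) (hksa.sub hhsa)
    rw [hesa.star_eq] at h1
    refine h1.trans ?_
    exact smul_le_smul_of_nonneg_right hkh.le hee0
  have hkey : (c - ε) • (e * e) ≤ e * h * e := by
    have h2 : e * h * e = e * k * e - e * (k - h) * e := by noncomm_ring
    rw [h2, sub_smul]
    exact sub_le_sub hek hconj
  -- apply the hypothesis and positivity
  have hP0 : P (e * h * e) = 0 := by
    have heq : e * h * e = star e * star a * a * e := by
      rw [hesa.star_eq, hh_def]; noncomm_ring
    rw [heq]; exact ha e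
  have hpos1 : (0 : A) ≤ P (e * h * e - (c - ε) • (e * e)) :=
    hPpos _ (sub_nonneg.mpr hkey)
  have hsplit : P (e * h * e - (c - ε) • (e * e))
      = P (e * h * e) - (c - ε) • P (e * e) := by
    rw [map_sub]
    congr 1
    exact P.map_smul_of_tower _ _
  rw [hsplit, hP0, zero_sub] at hpos1
  -- P (e * e) is nonneg
  have heeA : e * e ∈ (A_ n : Set A) := mul_mem heA heA
  have hPee : P (e * e) = Pn n (e * e) := hP n _ heeA
  have hPee0 : (0 : A) ≤ P (e * e) := by
    rw [hPee]; exact (hPn n).2.2.2.2.2.1 _ heeA hee0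
  have hcε : (0 : ℝ) < c - ε := by
    rw [hc, hε]; nlinarith
  have hfin : (c - ε) • P (e * e) = 0 := by
    refine le_antisymm ?_ (smul_nonneg hcε.le hPee0)
    simpa using hpos1
  have hPee_zero : P (e * e) = 0 := by
    rcases smul_eq_zero.mp hfin with h0 | h0
    · exact absurd h0 (ne_of_gt hcε)
    · exact h0
  have : Pn n (star e * e) = 0 := by
    rw [hesa.star_eq, ← hPee]; exact hPee_zero
  exact hene (hPnFaithful n e heA this)
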